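/- The H∞ terminal cost satisfies the zero-sum dissipation property: with A_f = A + BK_f and V_f(x) = xᵀPx, for every x ∈ ℝⁿ one has sup over w ∈ ℝⁿ of [V_f(A_f x + w) − V_f(x) + xᵀQx + (K_f x)ᵀR(K_f x) − γ_f²wᵀw] = 0; that is, the expression in brackets is nonpositive for all w and the supremum is attained (at w* = (γ_f²I − P)^{-1}PA_f x). (Zero-sum game property (eq. (33)) used in the proof of Theorem 2.) -/

import Mathlib

open Matrix

private lemma real_ct_eq_t {k l : Type*} (M : Matrix k l ℝ) : Mᴴ = Mᵀ := by
  ext i j; simp [Matrix.conjTranspose_apply]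

private lemma dot_sym {k : ℕ} {M : Matrix (Fin k) (Fin k) ℝ} (hM : Mᵀ = M)
    (a b : Fin k → ℝ) : a ⬝ᵥ M *ᵥ b = b ⬝ᵥ M *ᵥ a := by
  rw [Matrix.dotProduct_mulVec, ← Matrix.mulVec_transpose, hM, dotProduct_comm]

private lemma dot_conj {k l : ℕ} (M : Matrix (Fin k) (Fin l) ℝ)
    (N : Matrix (Fin k) (Fin k) ℝ) (x : Fin l → ℝ) :
    x ⬝ᵥ (Mᵀ * N * M) *ᵥ x = (M *ᵥ x) ⬝ᵥ N *ᵥ (M *ᵥ x) := by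
  rw [← Matrix.mulVec_mulVec, ← Matrix.mulVec_mulVec, Matrix.dotProduct_mulVec,
    ← Matrix.mulVec_transpose, Matrix.transpose_transpose]

/-- Zero-sum game property (eq. (33)) of the `H∞` terminal cost: with `A_f = A + BK_f`
and `V_f(x) = xᵀPx`, for every `x` the expression
`V_f(A_f x + w) − V_f(x) + xᵀQx + (K_f x)ᵀR(K_f x) − γ_f²wᵀw` is nonpositive for all `w`,
and vanishes at `w* = (γ_f²I − P)⁻¹PA_f x`. -/
theorem stmt14 (n m : ℕ) (hn : 0 < n) (hm : 0 < m)
    (A : Matrix (Fin n) (Fin n) ℝ) (B : Matrix (Fin n) (Fin m) ℝ)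
    (Q : Matrix (Fin n) (Fin n) ℝ) (R : Matrix (Fin m) (Fin m) ℝ)
    (hQ : Q.PosSemidef) (hR : R.PosDef)
    (γf : ℝ) (hγf : 0 < γf)
    (P : Matrix (Fin n) (Fin n) ℝ) (hP : P.PosDef)
    (hγP : (γf ^ 2 • (1 : Matrix (Fin n) (Fin n) ℝ) - P).PosDef)
    (Pbar : Matrix (Fin n) (Fin n) ℝ)
    (hPbar : Pbar = P + P * (γf ^ 2 • (1 : Matrix (Fin n) (Fin n) ℝ) - P)⁻¹ * P)
    (hRic : P = Q + Aᵀ * Pbar * A -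
      Aᵀ * Pbar * B * (R + Bᵀ * Pbar * B)⁻¹ * Bᵀ * Pbar * A)
    (Kf : Matrix (Fin m) (Fin n) ℝ)
    (hKf : Kf = -((R + Bᵀ * Pbar * B)⁻¹ * Bᵀ * Pbar * A))
    (x : Fin n → ℝ) :
    ∀ (Af : Matrix (Fin n) (Fin n) ℝ) (Vf : (Fin n → ℝ) → ℝ) (e : (Fin n → ℝ) → ℝ),
      Af = A + B * Kf →
      Vf = (fun y => y ⬝ᵥ (P *ᵥ y)) →
      (e = fun w => Vf (Af *ᵥ x + w) - Vf x + x ⬝ᵥ (Q *ᵥ x) +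
        (Kf *ᵥ x) ⬝ᵥ (R *ᵥ (Kf *ᵥ x)) - γf ^ 2 * (w ⬝ᵥ w)) →
      (∀ w : Fin n → ℝ, e w ≤ 0) ∧
      e (((γf ^ 2 • (1 : Matrix (Fin n) (Fin n) ℝ) - P)⁻¹ * P * Af) *ᵥ x) = 0 := by
  intro Af Vf e hAf hVf he
  set S : Matrix (Fin n) (Fin n) ℝ := γf ^ 2 • (1 : Matrix (Fin n) (Fin n) ℝ) - P with hS
  set G : Matrix (Fin m) (Fin m) ℝ := R + Bᵀ * Pbar * B with hG
  set L : Matrix (Fin m) (Fin n) ℝ := Bᵀ * Pbar * A with hL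
  -- basic symmetry facts
  have hPsym : Pᵀ = P := (real_ct_eq_t P) ▸ hP.isHermitian
  have hSsym : Sᵀ = S := (real_ct_eq_t S) ▸ hγP.isHermitian
  have hSd : IsUnit S.det := hγP.det_pos.ne'.isUnit
  have hSS : S * S⁻¹ = 1 := Matrix.mul_nonsing_inv _ hSd
  have hSinvsym : (S⁻¹)ᵀ = S⁻¹ := by rw [Matrix.transpose_nonsing_inv, hSsym]
  have hPbarsym : Pbarᵀ = Pbar := by
    rw [hPbar]
    simp only [Matrix.transpose_add, Matrix.transpose_mul, hSinvsym, hPsym, mul_assoc]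
  have hPbarPSD : Pbar.PosSemidef := by
    rw [hPbar]
    refine hP.posSemidef.add ?_
    have := (hγP.inv.posSemidef).conjTranspose_mul_mul_same P
    rwa [real_ct_eq_t, hPsym] at this
  have hGposdef : G.PosDef := by
    rw [hG]
    refine hR.add_posSemidef ?_
    have := hPbarPSD.conjTranspose_mul_mul_same B
    rwa [real_ct_eq_t] at this
  have hGsym : Gᵀ = G := (real_ct_eq_t G) ▸ hGposdef.isHermitian
  have hGd : IsUnit G.det := hGposdef.det_pos.ne'.isUnit
  have hGG : G * G⁻¹ = 1 := Matrix.mul_nonsing_inv _ hGd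
  have hGinvsym : (G⁻¹)ᵀ = G⁻¹ := by rw [Matrix.transpose_nonsing_inv, hGsym]
  -- rewrite Kf in terms of G, L
  have hKf' : Kf = -(G⁻¹ * L) := by
    rw [hKf, hL]; simp only [Matrix.mul_assoc]
  have hKfT : Kfᵀ = -(Lᵀ * G⁻¹) := by
    rw [hKf']; simp [Matrix.transpose_mul, hGinvsym]
  have hGKf : G * Kf = -L := by
    rw [hKf', Matrix.mul_neg, ← Matrix.mul_assoc, hGG, Matrix.one_mul]
  have hLT : Lᵀ = Aᵀ * Pbar * B := by
    rw [hL]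
    simp only [Matrix.transpose_mul, Matrix.transpose_transpose, hPbarsym, Matrix.mul_assoc]
  -- the key matrix identity (Riccati)
  have e1 : Afᵀ * Pbar * Af + Kfᵀ * R * Kf
      = Aᵀ * Pbar * A + Lᵀ * Kf + Kfᵀ * L + Kfᵀ * (G * Kf) := by
    rw [hAf, hG, hLT, hL]
    simp only [Matrix.transpose_add, Matrix.transpose_mul, Matrix.add_mul, Matrix.mul_add,
      Matrix.mul_assoc]
    abel
  have e2 : Afᵀ * Pbar * Af + Kfᵀ * R * Kf = Aᵀ * Pbar * A - Lᵀ * (G⁻¹ * L) := by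
    rw [e1, hGKf, hKfT, hKf']
    simp only [Matrix.mul_neg, Matrix.neg_mul, neg_neg, Matrix.mul_assoc, sub_eq_add_neg]
    abel
  have hRic' : P = Q + Aᵀ * Pbar * A - Lᵀ * (G⁻¹ * L) := by
    rw [hRic]
    congr 1
    rw [hLT, hL]
    simp only [Matrix.mul_assoc]
  have hM0 : Afᵀ * Pbar * Af + Q + Kfᵀ * R * Kf - P = 0 := by
    have h : Afᵀ * Pbar * Af + Q + Kfᵀ * R * Kf - P
        = (Afᵀ * Pbar * Af + Kfᵀ * R * Kf) + Q - P := by abel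
    rw [h, e2, hRic']; abel
  -- specialize to x
  set u : Fin n → ℝ := Af *ᵥ x with hu
  have hqx : u ⬝ᵥ P *ᵥ u + u ⬝ᵥ (P * S⁻¹ * P) *ᵥ u + x ⬝ᵥ Q *ᵥ x +
      (Kf *ᵥ x) ⬝ᵥ R *ᵥ (Kf *ᵥ x) - x ⬝ᵥ P *ᵥ x = 0 := by
    have h0 : x ⬝ᵥ (Afᵀ * Pbar * Af + Q + Kfᵀ * R * Kf - P) *ᵥ x = 0 := by
      rw [hM0]; simp
    have h1 : x ⬝ᵥ (Afᵀ * Pbar * Af) *ᵥ x = u ⬝ᵥ P *ᵥ u + u ⬝ᵥ (P * S⁻¹ * P) *ᵥ u := by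
      rw [dot_conj, ← hu, hPbar, Matrix.add_mulVec, dotProduct_add]
    have h2 : x ⬝ᵥ (Kfᵀ * R * Kf) *ᵥ x = (Kf *ᵥ x) ⬝ᵥ R *ᵥ (Kf *ᵥ x) := dot_conj Kf R x
    rw [Matrix.sub_mulVec, Matrix.add_mulVec, Matrix.add_mulVec, dotProduct_sub,
      dotProduct_add, dotProduct_add, h1, h2] at h0
    linarith [h0]
  -- the maximizer
  set wst : Fin n → ℝ := S⁻¹ *ᵥ (P *ᵥ u) with hwst
  have f1 : S *ᵥ wst = P *ᵥ u := by
    rw [hwst]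
    simp only [Matrix.mulVec_mulVec]
    rw [← mul_assoc, hSS, one_mul]
  have f4 : wst ⬝ᵥ S *ᵥ wst = u ⬝ᵥ (P * S⁻¹ * P) *ᵥ u := by
    rw [f1]
    have h : u ⬝ᵥ (P * S⁻¹ * P) *ᵥ u = (P *ᵥ u) ⬝ᵥ S⁻¹ *ᵥ (P *ᵥ u) := by
      have h2 := dot_conj P S⁻¹ u
      rwa [hPsym] at h2
    rw [h, hwst, dotProduct_comm]
  have f5 : ∀ w : Fin n → ℝ, w ⬝ᵥ S *ᵥ w = γf ^ 2 * (w ⬝ᵥ w) - w ⬝ᵥ P *ᵥ w := by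
    intro w
    rw [hS, Matrix.sub_mulVec, dotProduct_sub, Matrix.smul_mulVec,
      Matrix.one_mulVec, dotProduct_smul, smul_eq_mul]
  -- key pointwise identity
  have hE : ∀ w : Fin n → ℝ, e w = -((w - wst) ⬝ᵥ S *ᵥ (w - wst)) := by
    intro w
    have expL : e w = u ⬝ᵥ P *ᵥ u + u ⬝ᵥ P *ᵥ w + w ⬝ᵥ P *ᵥ u + w ⬝ᵥ P *ᵥ w
        - x ⬝ᵥ P *ᵥ x + x ⬝ᵥ Q *ᵥ x + (Kf *ᵥ x) ⬝ᵥ R *ᵥ (Kf *ᵥ x)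
        - γf ^ 2 * (w ⬝ᵥ w) := by
      simp only [he, hVf, Matrix.mulVec_add, dotProduct_add, add_dotProduct]
      ring
    have expR : (w - wst) ⬝ᵥ S *ᵥ (w - wst)
        = w ⬝ᵥ S *ᵥ w - w ⬝ᵥ S *ᵥ wst - wst ⬝ᵥ S *ᵥ w + wst ⬝ᵥ S *ᵥ wst := by
      simp only [Matrix.mulVec_sub, dotProduct_sub, sub_dotProduct]; ring
    have f2 : w ⬝ᵥ S *ᵥ wst = w ⬝ᵥ P *ᵥ u := by rw [f1]
    have f3 : wst ⬝ᵥ S *ᵥ w = w ⬝ᵥ P *ᵥ u := by rw [dot_sym hSsym, f2]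
    have f6 : u ⬝ᵥ P *ᵥ w = w ⬝ᵥ P *ᵥ u := dot_sym hPsym u w
    rw [expL, expR, f2, f3, f4, f6, f5 w]
    linarith [hqx]
  have hpt : (S⁻¹ * P * Af) *ᵥ x = wst := by
    simp only [hwst, hu, Matrix.mulVec_mulVec, mul_assoc]
  refine ⟨fun w => ?_, ?_⟩
  · rw [hE w]
    have h := hγP.posSemidef.dotProduct_mulVec_nonneg (w - wst)
    have hst : star (w - wst) = w - wst := by
      funext i; simp
    rw [hst] at h
    linarith
  · rw [hpt, hE wst]
    simp
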